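/- Let f : (0,1] → ℝ be nondecreasing, and let 0 < a ≤ t with 64t ≤ 1. Then ∫_a^t ( f(32s) − f(s) ) / s ds ≤ 6 · log 2 · ( f(1) − f(a) ). -/

import Mathlib

open intervalIntegral

/-- Dyadic estimate: for `f` nondecreasing on `(0,1]` and `0 < a ≤ t` with `64 t ≤ 1`,
`∫_a^t (f(32 s) − f(s))/s ds ≤ 6 log 2 (f(1) − f(a))`. -/
theorem dyadic_pinching_integral_bound (f : ℝ → ℝ)
    (hf : MonotoneOn f (Set.Ioc (0 : ℝ) 1))
    (a t : ℝ) (ha : 0 < a) (hat : a ≤ t) (ht : 64 * t ≤ 1) :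
    (∫ s in a..t, (f (32 * s) - f s) / s) ≤ 6 * Real.log 2 * (f 1 - f a) := by
  set g : ℝ → ℝ := fun s => f s / s with hg
  have ht0 : 0 < t := lt_of_lt_of_le ha hat
  have h32t : 32 * t ≤ 1 := by linarith
  have ha1 : a ≤ 1 := by linarith
  have hlog2 : (0:ℝ) < Real.log 2 := Real.log_pos (by norm_num)
  -- integrability helper
  have hint : ∀ x y : ℝ, 0 < x → x ≤ y → y ≤ 1 →
      IntervalIntegrable g MeasureTheory.volume x y := by
    intro x y hx hxy hy1
    have hsub : Set.uIcc x y ⊆ Set.Ioc (0:ℝ) 1 := by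
      rw [Set.uIcc_of_le hxy]
      intro s hs
      exact ⟨lt_of_lt_of_le hx hs.1, le_trans hs.2 hy1⟩
    have hfi : IntervalIntegrable f MeasureTheory.volume x y :=
      (hf.mono hsub).intervalIntegrable
    have hcont : ContinuousOn (fun s : ℝ => s⁻¹) (Set.uIcc x y) := by
      apply ContinuousOn.inv₀ continuousOn_id
      intro s hs
      rw [Set.uIcc_of_le hxy] at hs
      exact ne_of_gt (lt_of_lt_of_le hx hs.1)
    simpa [hg, div_eq_mul_inv] using hfi.mul_continuousOn hcont
  have hIg : IntervalIntegrable g MeasureTheory.volume a t := hint a t ha hat (by linarith)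
  have hIg32' : IntervalIntegrable g MeasureTheory.volume (32*a) (32*t) :=
    hint _ _ (by linarith) (by linarith) h32t
  have hIcomp : IntervalIntegrable (fun s => g (32*s)) MeasureTheory.volume a t := by
    have := hIg32'.comp_mul_left (c := 32)
    simpa using this
  have hIcomp' : IntervalIntegrable (fun s => 32 * g (32*s)) MeasureTheory.volume a t :=
    hIcomp.const_mul 32
  -- rewrite integrand
  have heq : Set.EqOn (fun s => (f (32*s) - f s)/s) (fun s => 32 * g (32*s) - g s)
      (Set.uIcc a t) := by
    intro s hs
    rw [Set.uIcc_of_le hat] at hs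
    have hs0 : s ≠ 0 := ne_of_gt (lt_of_lt_of_le ha hs.1)
    simp only [hg]
    field_simp
  rw [intervalIntegral.integral_congr heq, intervalIntegral.integral_sub hIcomp' hIg]
  have hsubst : (∫ s in a..t, 32 * g (32*s)) = ∫ s in (32*a)..(32*t), g s := by
    have := intervalIntegral.smul_integral_comp_mul_left (a := a) (b := t) g 32
    simpa [intervalIntegral.integral_const_mul] using this
  rw [hsubst]
  -- additivity: ∫_{32a}^{32t} g - ∫_a^t g = ∫_t^{32t} g - ∫_a^{32a} g
  have hIbig : IntervalIntegrable g MeasureTheory.volume a (32*t) :=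
    hint _ _ ha (by linarith) h32t
  have h1 : (∫ s in a..(32*a), g s) + (∫ s in (32*a)..(32*t), g s) = ∫ s in a..(32*t), g s :=
    intervalIntegral.integral_add_adjacent_intervals (hint _ _ ha (by linarith) (by linarith))
      hIg32'
  have h2 : (∫ s in a..t, g s) + (∫ s in t..(32*t), g s) = ∫ s in a..(32*t), g s :=
    intervalIntegral.integral_add_adjacent_intervals hIg (hint _ _ ht0 (by linarith) h32t)
  have hkey : (∫ s in (32*a)..(32*t), g s) - (∫ s in a..t, g s)
      = (∫ s in t..(32*t), g s) - (∫ s in a..(32*a), g s) := by linarith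
  rw [hkey]
  -- bound the two integrals
  have hub : (∫ s in t..(32*t), g s) ≤ (f 1) * Real.log 32 := by
    have hmono : (∫ s in t..(32*t), g s) ≤ ∫ s in t..(32*t), f 1 * s⁻¹ := by
      apply intervalIntegral.integral_mono_on (by linarith)
        (hint _ _ ht0 (by linarith) h32t)
        ((intervalIntegrable_inv (fun s hs => by
          rw [Set.uIcc_of_le (by linarith : t ≤ 32*t)] at hs
          exact ne_of_gt (lt_of_lt_of_le ht0 hs.1)) continuousOn_id).const_mul (f 1))
      intro s hs
      have hs0 : 0 < s := lt_of_lt_of_le ht0 hs.1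
      have hsle : f s ≤ f 1 := hf ⟨hs0, by linarith [hs.2]⟩ ⟨zero_lt_one, le_refl 1⟩
        (by linarith [hs.2])
      simp only [hg]
      rw [div_eq_mul_inv]
      exact mul_le_mul_of_nonneg_right hsle (le_of_lt (inv_pos.mpr hs0))
    have hinv : (∫ s in t..(32*t), s⁻¹) = Real.log 32 := by
      rw [integral_inv (by
        rw [Set.uIcc_of_le (by linarith : t ≤ 32*t)]
        intro h
        exact absurd h.1 (not_le.mpr ht0))]
      rw [mul_div_assoc, div_self (ne_of_gt ht0), mul_one]
    calc (∫ s in t..(32*t), g s) ≤ ∫ s in t..(32*t), f 1 * s⁻¹ := hmono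
      _ = f 1 * Real.log 32 := by rw [intervalIntegral.integral_const_mul, hinv]
  have hlb : (f a) * Real.log 32 ≤ ∫ s in a..(32*a), g s := by
    have hmono : (∫ s in a..(32*a), f a * s⁻¹) ≤ ∫ s in a..(32*a), g s := by
      apply intervalIntegral.integral_mono_on (by linarith)
        ((intervalIntegrable_inv (fun s hs => by
          rw [Set.uIcc_of_le (by linarith : a ≤ 32*a)] at hs
          exact ne_of_gt (lt_of_lt_of_le ha hs.1)) continuousOn_id).const_mul (f a))
        (hint _ _ ha (by linarith) (by linarith))
      intro s hs
      have hs0 : 0 < s := lt_of_lt_of_le ha hs.1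
      have hsle : f a ≤ f s := hf ⟨ha, ha1⟩ ⟨hs0, by linarith [hs.2]⟩ hs.1
      simp only [hg]
      rw [div_eq_mul_inv]
      exact mul_le_mul_of_nonneg_right hsle (le_of_lt (inv_pos.mpr hs0))
    have hinv : (∫ s in a..(32*a), s⁻¹) = Real.log 32 := by
      rw [integral_inv (by
        rw [Set.uIcc_of_le (by linarith : a ≤ 32*a)]
        intro h
        exact absurd h.1 (not_le.mpr ha))]
      rw [mul_div_assoc, div_self (ne_of_gt ha), mul_one]
    calc f a * Real.log 32 = ∫ s in a..(32*a), f a * s⁻¹ := by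
          rw [intervalIntegral.integral_const_mul, hinv]
      _ ≤ ∫ s in a..(32*a), g s := hmono
  have hfa1 : f a ≤ f 1 := hf ⟨ha, ha1⟩ ⟨zero_lt_one, le_refl 1⟩ ha1
  have hlog32 : Real.log 32 = 5 * Real.log 2 := by
    rw [show (32:ℝ) = 2^5 by norm_num, Real.log_pow]
    push_cast; ring
  nlinarith [hlog2, hfa1, hub, hlb]
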